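/- If f(u) = u/(1−u²)^l − αu on (−1,1) with l > 1 and α ∈ ℝ, and F(u) = ∫₀^u f(v)dv, then there exist β, C > 0 such that |f(u)| ≤ β|F(u)|^κ + C for all u ∈ (−1,1), where κ = 1 + 1/(l−1). -/

import Mathlib

open Real intervalIntegral

lemma integral_f (l α : ℝ) (hl : 1 < l) (u : ℝ) (hu : u ∈ Set.Ioo (-1:ℝ) 1) :
    ∫ v in (0:ℝ)..u, (v / (1 - v ^ 2) ^ l - α * v)
      = ((1 - u ^ 2) ^ (1 - l) - 1) / (2 * (l - 1)) - α * u ^ 2 / 2 := by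
  obtain ⟨hu1, hu2⟩ := hu
  have hll : l - 1 ≠ 0 := by linarith
  have hmem : ∀ v ∈ Set.uIcc (0:ℝ) u, 0 < 1 - v ^ 2 := by
    intro v hv
    rcases Set.mem_uIcc.mp hv with ⟨h1, h2⟩ | ⟨h1, h2⟩ <;> nlinarith
  have hderiv : ∀ v ∈ Set.uIcc (0:ℝ) u,
      HasDerivAt (fun x => (1 - x ^ 2) ^ (1 - l) / (2 * (l - 1)) - α * x ^ 2 / 2)
        (v / (1 - v ^ 2) ^ l - α * v) v := by
    intro v hv
    have ht := hmem v hv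
    have h1 : HasDerivAt (fun x : ℝ => 1 - x ^ 2) (-(2 * v)) v := by
      simpa using (hasDerivAt_pow 2 v).const_sub 1
    have h2 : HasDerivAt (fun x : ℝ => (1 - x ^ 2) ^ (1 - l))
        ((1 - l) * (1 - v ^ 2) ^ (1 - l - 1) * (-(2 * v))) v := by
      exact (Real.hasDerivAt_rpow_const (Or.inl (ne_of_gt ht))).comp v h1
    have h3 : HasDerivAt (fun x : ℝ => α * x ^ 2 / 2) (α * v) v := by
      have := ((hasDerivAt_pow 2 v).const_mul α).div_const 2
      simpa using this.congr_deriv (by ring)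
    have h4 := (h2.div_const (2 * (l - 1))).sub h3
    refine h4.congr_deriv ?_
    have he : (1 : ℝ) - l - 1 = -l := by ring
    rw [he, Real.rpow_neg ht.le]
    field_simp
    ring
  have hcont : IntervalIntegrable (fun v => v / (1 - v ^ 2) ^ l - α * v)
      MeasureTheory.volume 0 u := by
    apply ContinuousOn.intervalIntegrable
    apply ContinuousOn.sub
    · apply ContinuousOn.div continuousOn_id
      · exact fun v hv => (Continuous.rpow_const (by continuity)
          (fun x => Or.inr (le_trans (by norm_num) hl.le))).continuousOn v hv
      · intro v hv
        exact ne_of_gt (Real.rpow_pos_of_pos (hmem v hv) l)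
    · exact (continuous_const.mul continuous_id).continuousOn
  have := intervalIntegral.integral_eq_sub_of_hasDerivAt hderiv hcont
  rw [this]
  norm_num
  field_simp
  ring

/-- For the singular potential `f(u) = u/(1-u²)^l - αu` on `(-1,1)` with
`l > 1`, one has `|f(u)| ≤ β |F(u)|^κ + C` with `κ = 1 + 1/(l-1)`. -/
theorem stmt_18 (l α : ℝ) (hl : 1 < l) :
    ∃ β > 0, ∃ C > 0, ∀ u ∈ Set.Ioo (-1 : ℝ) 1,
      |u / (1 - u ^ 2) ^ l - α * u| ≤
        β * |∫ v in (0 : ℝ)..u, (v / (1 - v ^ 2) ^ l - α * v)| ^ (1 + 1 / (l - 1))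
          + C := by
  have hl1 : (0:ℝ) < l - 1 := by linarith
  set κ : ℝ := 1 + 1 / (l - 1) with hκdef
  have hκpos : 0 < κ := by positivity
  have hκ : (1 - l) * κ = -l := by
    rw [hκdef, mul_add, mul_one, mul_one_div, show (1 - l) = -(l - 1) by ring, neg_div,
      div_self hl1.ne']; ring
  set M : ℝ := 2 * (1 + (l - 1) * |α|) with hM
  have hMpos : 0 < M := by positivity
  have hβpos : (0:ℝ) < (4 * (l - 1)) ^ κ := Real.rpow_pos_of_pos (by linarith) κ
  refine ⟨(4 * (l - 1)) ^ κ, hβpos, M ^ κ + |α| + 1, by positivity, ?_⟩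
  intro u hu
  obtain ⟨hu1, hu2⟩ := hu
  set t : ℝ := 1 - u ^ 2 with htdef
  have ht : 0 < t := by nlinarith
  rw [integral_f l α hl u ⟨hu1, hu2⟩]
  have htl : 0 < t ^ l := Real.rpow_pos_of_pos ht l
  have hu' : |u| ≤ 1 := by rw [abs_le]; constructor <;> linarith
  have hLHS : |u / t ^ l - α * u| ≤ 1 / t ^ l + |α| := by
    calc |u / t ^ l - α * u| ≤ |u / t ^ l| + |α * u| := abs_sub _ _
    _ = |u| / t ^ l + |α| * |u| := by rw [abs_div, abs_mul, abs_of_pos htl]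
    _ ≤ 1 / t ^ l + |α| * 1 := by gcongr
    _ = 1 / t ^ l + |α| := by ring
  set X : ℝ := t ^ (1 - l) with hX
  have hXpos : 0 < X := Real.rpow_pos_of_pos ht _
  have hkey : X ^ κ = 1 / t ^ l := by
    rw [hX, ← Real.rpow_mul ht.le, hκ, Real.rpow_neg ht.le, one_div]
  set F : ℝ := (X - 1) / (2 * (l - 1)) - α * u ^ 2 / 2 with hFdef
  have habs : 0 ≤ |F| ^ κ := Real.rpow_nonneg (abs_nonneg F) κ
  rcases le_or_gt X M with hXM | hXM
  · -- small X: everything bounded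
    have h1 : (1:ℝ) / t ^ l ≤ M ^ κ := by
      rw [← hkey]; exact Real.rpow_le_rpow hXpos.le hXM hκpos.le
    have h2 : 0 ≤ (4 * (l - 1)) ^ κ * |F| ^ κ := by positivity
    calc |u / t ^ l - α * u| ≤ 1 / t ^ l + |α| := hLHS
      _ ≤ M ^ κ + |α| + 1 := by linarith
      _ ≤ (4 * (l - 1)) ^ κ * |F| ^ κ + (M ^ κ + |α| + 1) := by linarith
  · -- large X: F is large
    have hu2' : u ^ 2 ≤ 1 := by nlinarith
    have hαu : α * u ^ 2 ≤ |α| := by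
      calc α * u ^ 2 ≤ |α| * u ^ 2 := by nlinarith [le_abs_self α, sq_nonneg u]
        _ ≤ |α| * 1 := by nlinarith [abs_nonneg α]
        _ = |α| := mul_one _
    have hnum : 0 ≤ X - 2 - 2 * (l - 1) * (α * u ^ 2) := by nlinarith
    have hFlb : X / (4 * (l - 1)) ≤ F := by
      have heq : F - X / (4 * (l - 1))
          = (X - 2 - 2 * (l - 1) * (α * u ^ 2)) / (4 * (l - 1)) := by
        rw [hFdef]; field_simp; ring
      have := div_nonneg hnum (by linarith : (0:ℝ) ≤ 4 * (l - 1))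
      linarith
    have hFabs : X / (4 * (l - 1)) ≤ |F| := hFlb.trans (le_abs_self F)
    have hmono : (X / (4 * (l - 1))) ^ κ ≤ |F| ^ κ :=
      Real.rpow_le_rpow (by positivity) hFabs hκpos.le
    have hdiv : (X / (4 * (l - 1))) ^ κ = X ^ κ / (4 * (l - 1)) ^ κ :=
      Real.div_rpow hXpos.le (by linarith : (0:ℝ) ≤ 4 * (l - 1)) κ
    have hfinal : 1 / t ^ l ≤ (4 * (l - 1)) ^ κ * |F| ^ κ := by
      rw [← hkey]
      calc X ^ κ = (4 * (l - 1)) ^ κ * (X ^ κ / (4 * (l - 1)) ^ κ) := by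
            field_simp
        _ = (4 * (l - 1)) ^ κ * (X / (4 * (l - 1))) ^ κ := by rw [hdiv]
        _ ≤ (4 * (l - 1)) ^ κ * |F| ^ κ :=
            mul_le_mul_of_nonneg_left hmono hβpos.le
    have hMκ : 0 ≤ M ^ κ := Real.rpow_nonneg hMpos.le κ
    calc |u / t ^ l - α * u| ≤ 1 / t ^ l + |α| := hLHS
      _ ≤ (4 * (l - 1)) ^ κ * |F| ^ κ + (M ^ κ + |α| + 1) := by linarith
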